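/- Let g be a finite-dimensional simple Lie algebra over an algebraically closed field of characteristic zero. Then there exists a pair (a, b) of elements of g whose common centralizer is trivial: C_g(a) ∩ C_g(b) = 0. (In particular, the set of such pairs is nonempty; the paper shows it is moreover Zariski open and dense in g ⊕ g.) -/

import Mathlib

set_option maxHeartbeats 1000000

open LieModule LieAlgebra Module

section Aux

variable {k : Type*} [Field k] [IsAlgClosed k] [CharZero k]
variable {𝔤 : Type*} [LieRing 𝔤] [LieAlgebra k 𝔤] [FiniteDimensional k 𝔤]
variable (H : LieSubalgebra k 𝔤) [H.IsCartanSubalgebra]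

/-- If the Killing form vanishes identically, then every weight vanishes on every
coroot space of a nonzero weight. -/
lemma weight_apply_eq_zero_of_killing_eq_zero
    (hk : ∀ x y : 𝔤, killingForm k 𝔤 x y = 0)
    (β : Weight k H 𝔤) (hβ : β.IsNonZero) {h : H} (hh : h ∈ corootSpace (β : H → k))
    (α : Weight k H 𝔤) : α h = 0 := by
  classical
  have key : ∀ α : Weight k H 𝔤, ∃ a b : ℤ, b ≠ 0 ∧
      (a : k) * β h + (b : k) * α h = 0 := by
    intro α
    obtain ⟨a, b, hb, hab⟩ := LieModule.exists_forall_mem_corootSpace_smul_add_eq_zero 𝔤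
      (β : H → k) (α : H → k) (by exact_mod_cast hβ) α.genWeightSpace_ne_bot
    refine ⟨a, b, by exact_mod_cast hb.ne', ?_⟩
    have := hab h hh
    simpa [zsmul_eq_mul, mul_comm] using this
  -- the trace form identity
  have htr : ∑ χ : Weight k H 𝔤,
      (finrank k (genWeightSpace 𝔤 (χ : H → k))) • (χ h * χ h) = 0 := by
    have := LieModule.traceForm_eq_sum_finrank_nsmul_mul k H 𝔤 h h
    rw [← this]
    have : LieModule.traceForm k H 𝔤 h h = killingForm k 𝔤 (h : 𝔤) (h : 𝔤) := by
      rw [← LieAlgebra.restrict_killingForm k 𝔤 H]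
      rfl
    rw [this, hk]
  have hβh : β h = 0 := by
    by_contra hne
    choose A B hB hAB using key
    set r : Weight k H 𝔤 → ℚ := fun α => -(A α / B α) with hr
    have hrk : ∀ α : Weight k H 𝔤, α h = (r α : k) * β h := by
      intro α
      have hBk : (B α : k) ≠ 0 := by exact_mod_cast hB α
      have h0 := hAB α
      rw [hr]
      push_cast
      field_simp
      linear_combination h0
    have hr1 : r β = 1 := by
      have h1 := hAB β
      have h2 : ((A β + B β : ℤ) : k) * β h = 0 := by push_cast; linear_combination h1
      have h3 : A β + B β = 0 := by
        have := mul_eq_zero.mp h2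
        rcases this with h | h
        · exact_mod_cast h
        · exact absurd h hne
      have hBQ : (B β : ℚ) ≠ 0 := by exact_mod_cast hB β
      have h4 : (A β : ℚ) = -(B β : ℚ) := by exact_mod_cast (by omega : A β = -B β)
      show -((A β : ℚ) / (B β : ℚ)) = 1
      rw [h4]
      field_simp
    -- now the sum identity gives a contradiction
    have hsum : ((∑ χ : Weight k H 𝔤,
        (finrank k (genWeightSpace 𝔤 (χ : H → k)) : ℚ) * (r χ)^2 : ℚ) : k) * (β h * β h) = 0 := by
      rw [← htr]
      push_cast
      rw [Finset.sum_mul]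
      refine Finset.sum_congr rfl fun χ _ => ?_
      rw [hrk χ]
      push_cast
      ring_nf
    have hsumQ : (∑ χ : Weight k H 𝔤,
        (finrank k (genWeightSpace 𝔤 (χ : H → k)) : ℚ) * (r χ)^2 : ℚ) = 0 := by
      have := mul_eq_zero.mp hsum
      rcases this with h | h
      · exact_mod_cast h
      · exact absurd (mul_self_eq_zero.mp h) hne
    have hzero := (Finset.sum_eq_zero_iff_of_nonneg (fun χ _ =>
      mul_nonneg (by positivity) (sq_nonneg (r χ)))).mp hsumQ β (Finset.mem_univ β)
    rw [hr1] at hzero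
    have hfr : 0 < finrank k (genWeightSpace 𝔤 (β : H → k)) := by
      have : Nontrivial (genWeightSpace 𝔤 (β : H → k)) :=
        (LieSubmodule.nontrivial_iff_ne_bot _ _ _).mpr β.genWeightSpace_ne_bot
      exact finrank_pos
    simp at hzero
    omega
  obtain ⟨a, b, hb, hab⟩ := key α
  have hBk : (b : k) ≠ 0 := by exact_mod_cast hb
  rw [hβh, mul_zero, zero_add] at hab
  exact (mul_eq_zero.mp hab).resolve_left hBk


/-- A simple Lie algebra has a nonzero weight for any Cartan subalgebra. -/
lemma exists_isNonZero_weight [LieAlgebra.IsSimple k 𝔤] :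
    ∃ β : Weight k H 𝔤, β.IsNonZero := by
  by_contra hcon
  push_neg at hcon
  have hzero : ∀ β : Weight k H 𝔤, (β : H → k) = 0 := by
    intro β
    have := hcon β
    exact this
  -- every weight space is contained in the zero root space
  have hle : ∀ χ : H → k, genWeightSpace 𝔤 χ ≤ rootSpace H 0 := by
    intro χ
    by_cases hχ : genWeightSpace 𝔤 χ = ⊥
    · simp [hχ]
    · have h0 : χ = 0 := hzero ⟨χ, hχ⟩
      rw [h0]
  have htop : (⊤ : LieSubmodule k H 𝔤) ≤ rootSpace H 0 := by
    rw [← LieModule.iSup_genWeightSpace_eq_top k H 𝔤]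
    exact iSup_le hle
  rw [rootSpace_zero_eq] at htop
  have hHtop : H = ⊤ := by
    rw [eq_top_iff]
    intro y _
    exact htop (LieSubmodule.mem_top _)
  -- hence 𝔤 is nilpotent, so solvable, contradicting simplicity
  haveI : LieRing.IsNilpotent (⊤ : LieSubalgebra k 𝔤) := hHtop ▸ inferInstance
  haveI : LieRing.IsNilpotent 𝔤 :=
    (LieSubalgebra.topEquiv : (⊤ : LieSubalgebra k 𝔤) ≃ₗ⁅k⁆ 𝔤).nilpotent_iff_equiv_nilpotent.mp
      inferInstance
  haveI : LieAlgebra.IsSolvable 𝔤 := inferInstance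
  haveI : Nontrivial 𝔤 := by
    by_contra hnt
    have : Subsingleton 𝔤 := not_nontrivial_iff_subsingleton.mp hnt
    exact LieAlgebra.IsSimple.non_abelian k (L := 𝔤) ⟨fun x y => Subsingleton.elim _ _⟩
  have h1 : LieAlgebra.radical k 𝔤 = ⊤ := LieAlgebra.radical_eq_top_of_isSolvable (R := k) (L := 𝔤)
  have h2 : LieAlgebra.radical k 𝔤 = ⊥ := LieAlgebra.HasTrivialRadical.radical_eq_bot
  rw [h1] at h2
  exact absurd h2 top_ne_bot

variable (k 𝔤) in
/-- A finite-dimensional simple Lie algebra over an algebraically closed field of characteristic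
zero has nondegenerate Killing form. -/
theorem isKilling_of_isSimple [LieAlgebra.IsSimple k 𝔤] : LieAlgebra.IsKilling k 𝔤 := by
  classical
  constructor
  rcases LieAlgebra.IsSimple.eq_bot_or_eq_top (LieIdeal.killingCompl k 𝔤 ⊤) with hc | hc
  · exact hc
  exfalso
  have hk : ∀ x y : 𝔤, killingForm k 𝔤 x y = 0 := by
    intro x y
    have hy : y ∈ LieIdeal.killingCompl k 𝔤 ⊤ := by rw [hc]; exact LieSubmodule.mem_top y
    exact (LieIdeal.mem_killingCompl k 𝔤 ⊤).mp hy x (LieSubmodule.mem_top x)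
  obtain ⟨a, hCa⟩ := LieAlgebra.exists_isCartanSubalgebra_engel k 𝔤
  haveI := hCa
  set H : LieSubalgebra k 𝔤 := LieSubalgebra.engel k a with hHdef
  clear_value H
  obtain ⟨β₀, hβ₀⟩ := exists_isNonZero_weight H (𝔤 := 𝔤)
  -- the subspace of `H` on which all weights vanish, viewed inside `𝔤`
  set N : Submodule k 𝔤 :=
    (⨅ α : Weight k H 𝔤, (α.ker : Submodule k H)).map (H : Submodule k 𝔤).subtype with hNdef
  set V : (H → k) → Submodule k 𝔤 :=
    fun χ => (genWeightSpace 𝔤 χ : Submodule k 𝔤) with hVdef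
  set I : Submodule k 𝔤 :=
    N ⊔ ⨆ β : Weight k H 𝔤, ⨆ _ : β.IsNonZero, V (β : H → k) with hIdef
  have hmemN : ∀ (z : H), (∀ α : Weight k H 𝔤, α z = 0) → (z : 𝔤) ∈ N := by
    intro z hz
    exact ⟨z, Submodule.mem_iInf _ |>.mpr fun α => hz α, rfl⟩
  have hmemN' : ∀ x ∈ N, ∃ z : H, (z : 𝔤) = x ∧ ∀ α : Weight k H 𝔤, α z = 0 := by
    rintro x ⟨z, hz, rfl⟩
    exact ⟨z, rfl, fun α => Submodule.mem_iInf _ |>.mp hz α⟩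
  have hVle : ∀ χ : H → k, χ ≠ 0 → V χ ≤ I := by
    intro χ hχ
    by_cases hbot : genWeightSpace 𝔤 χ = ⊥
    · rw [hVdef]
      simp only [hbot]
      simp
    · have : V χ ≤ ⨆ β : Weight k H 𝔤, ⨆ _ : β.IsNonZero, V (β : H → k) := by
        have hne : ((⟨χ, hbot⟩ : Weight k H 𝔤)).IsNonZero := hχ
        exact le_iSup_of_le ⟨χ, hbot⟩ (le_iSup_of_le hne le_rfl)
      exact le_trans this le_sup_right
  have hNle : N ≤ I := le_sup_left
  -- main bracket stability of `I` under root vectors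
  have hbr : ∀ (γ : H → k), ∀ y ∈ rootSpace H γ, ∀ x ∈ I, ⁅y, x⁆ ∈ I := by
    intro γ y hy x hx
    by_cases hy0 : y = 0
    · rw [hy0, zero_lie]; exact I.zero_mem
    have hγw : genWeightSpace 𝔤 γ ≠ ⊥ := by
      intro hbot
      apply hy0
      simpa [hbot] using hy
    suffices hmap : Submodule.map (LieAlgebra.ad k 𝔤 y) I ≤ I by
      exact hmap ⟨x, hx, by simp [LieAlgebra.ad_apply]⟩
    rw [hIdef, Submodule.map_sup]
    refine sup_le ?_ ?_
    · -- image of N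
      rintro _ ⟨n, hn, rfl⟩
      obtain ⟨z, rfl, hz⟩ := hmemN' n hn
      have hz0 : (z : 𝔤) ∈ rootSpace H 0 := by
        rw [rootSpace_zero_eq]
        exact z.2
      have hmem : ⁅y, (z : 𝔤)⁆ ∈ genWeightSpace 𝔤 (γ + 0) :=
        lie_mem_genWeightSpace_of_mem_genWeightSpace hy hz0
      rw [add_zero] at hmem
      by_cases hγ : γ = 0
      · -- bracket of two elements of `H`: all weights vanish on it
        rw [hγ, rootSpace_zero_eq] at hy
        set y' : H := ⟨y, hy⟩ with hy'
        have : ⁅y, (z : 𝔤)⁆ = (⁅y', z⁆ : H) := rfl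
        rw [LieAlgebra.ad_apply, this]
        refine hNle (hmemN _ fun α => ?_)
        exact LinearWeights.map_lie (α : H → k) α.genWeightSpace_ne_bot y' z
      · rw [LieAlgebra.ad_apply]; exact hVle γ hγ hmem
    · -- image of the nonzero weight spaces
      rw [Submodule.map_iSup]
      refine iSup_le fun β => ?_
      rw [Submodule.map_iSup]
      refine iSup_le fun hβ => ?_
      rintro _ ⟨v, hv, rfl⟩
      have hvv : v ∈ genWeightSpace 𝔤 (β : H → k) := hv
      have hmem : ⁅y, v⁆ ∈ genWeightSpace 𝔤 (γ + (β : H → k)) :=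
        lie_mem_genWeightSpace_of_mem_genWeightSpace hy hvv
      by_cases hγβ : γ + (β : H → k) = 0
      · -- the bracket lands in the coroot space of `γ`
        have hmem0 : ⁅y, v⁆ ∈ rootSpace H 0 := by rw [← hγβ]; exact hmem
        rw [rootSpace_zero_eq] at hmem0
        set w : H := ⟨⁅y, v⁆, hmem0⟩ with hw
        have hβγ : (β : H → k) = -γ := eq_neg_of_add_eq_zero_right hγβ
        have hγweight : (⟨γ, hγw⟩ : Weight k H 𝔤).IsNonZero := by
          intro h0
          exact hβ (show (β : H → k) = 0 by rw [hβγ, show γ = 0 from h0, neg_zero])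
        have hcor : w ∈ corootSpace γ := by
          rw [mem_corootSpace]
          refine Submodule.subset_span ⟨y, hy, v, ?_, rfl⟩
          rw [hβγ.symm]
          exact hvv
        have hall : ∀ α : Weight k H 𝔤, α w = 0 :=
          weight_apply_eq_zero_of_killing_eq_zero H hk ⟨γ, hγw⟩ hγweight hcor
        rw [LieAlgebra.ad_apply]
        exact hNle (by simpa [hw] using hmemN w hall)
      · rw [LieAlgebra.ad_apply]
        exact hVle (γ + β) hγβ hmem
  -- `I` is an ideal
  set J : LieIdeal k 𝔤 :=
    { carrier := I
      add_mem' := fun ha hb => I.add_mem ha hb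
      zero_mem' := I.zero_mem
      smul_mem' := fun c x hx => I.smul_mem c hx
      lie_mem := by
        intro y x hx
        have hy : y ∈ ⨆ χ : H → k, (genWeightSpace 𝔤 χ : Submodule k 𝔤) := by
          have := LieModule.iSup_genWeightSpace_eq_top k H 𝔤
          rw [← LieSubmodule.iSup_toSubmodule]
          rw [this]
          exact Submodule.mem_top
        refine Submodule.iSup_induction _ (motive := fun z => ⁅z, x⁆ ∈ I) hy
          (fun χ z hz => hbr χ z hz x hx)
          (by show ⁅(0 : 𝔤), x⁆ ∈ I; rw [zero_lie]; exact I.zero_mem) ?_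
        intro p q hp hq
        show ⁅p + q, x⁆ ∈ I
        rw [add_lie]
        exact I.add_mem hp hq } with hJdef
  -- `J` is neither `⊥` nor `⊤`
  have hJbot : J ≠ ⊥ := by
    intro hbot
    have h1 : V (β₀ : H → k) ≤ I := by
      have : V (β₀ : H → k) ≤ ⨆ β : Weight k H 𝔤, ⨆ _ : β.IsNonZero, V (β : H → k) :=
        le_iSup_of_le β₀ (le_iSup_of_le hβ₀ le_rfl)
      exact le_trans this le_sup_right
    have h2 : genWeightSpace 𝔤 (β₀ : H → k) ≠ ⊥ := β₀.genWeightSpace_ne_bot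
    obtain ⟨v, hv, hv0⟩ : ∃ v : 𝔤, v ∈ genWeightSpace 𝔤 (β₀ : H → k) ∧ v ≠ 0 := by
      have : Nontrivial (genWeightSpace 𝔤 (β₀ : H → k)) :=
        (LieSubmodule.nontrivial_iff_ne_bot _ _ _).mpr h2
      obtain ⟨⟨v, hv⟩, hv0⟩ := exists_ne (0 : genWeightSpace 𝔤 (β₀ : H → k))
      exact ⟨v, hv, by simpa [Subtype.ext_iff] using hv0⟩
    have : v ∈ J := h1 hv
    rw [hbot] at this
    exact hv0 (by simpa using this)
  have hJtop : J ≠ ⊤ := by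
    intro htop
    -- pick `h₁` with `β₀ h₁ ≠ 0`
    obtain ⟨h₁, hh₁⟩ : ∃ h₁ : H, β₀ h₁ ≠ 0 := by
      by_contra hcon
      push_neg at hcon
      exact hβ₀ (funext hcon)
    have hin : (h₁ : 𝔤) ∈ I := by
      have : (h₁ : 𝔤) ∈ J := htop ▸ LieSubmodule.mem_top _
      exact this
    rw [hIdef] at hin
    obtain ⟨n, hn, s, hs, hns⟩ := Submodule.mem_sup.mp hin
    -- `s` lies in both the zero weight space and the nonzero ones
    have hsH : s ∈ V 0 := by
      have h1 : (h₁ : 𝔤) ∈ V 0 := by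
        rw [hVdef]
        simp only
        rw [show (0 : H → k) = (0 : H → k) from rfl]
        have : (h₁ : 𝔤) ∈ rootSpace H 0 := by rw [rootSpace_zero_eq]; exact h₁.2
        exact this
      have h2 : n ∈ V 0 := by
        obtain ⟨z, hz, -⟩ := hmemN' n hn
        rw [← hz]
        have : (z : 𝔤) ∈ rootSpace H 0 := by rw [rootSpace_zero_eq]; exact z.2
        exact this
      have : s = (h₁ : 𝔤) - n := by rw [← hns]; abel
      rw [this]
      exact (V 0).sub_mem h1 h2
    have hdisj : Disjoint (V 0) (⨆ β : Weight k H 𝔤, ⨆ _ : β.IsNonZero, V (β : H → k)) := by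
      have hind := LieModule.iSupIndep_genWeightSpace k H 𝔤
      rw [← LieSubmodule.iSupIndep_toSubmodule] at hind
      have h0 := hind (0 : H → k)
      refine h0.mono_right ?_
      refine iSup_le fun β => iSup_le fun hβ => ?_
      exact le_iSup_of_le (β : H → k) (le_iSup_of_le (by exact_mod_cast hβ) le_rfl)
    have hs0 : s = 0 := by
      have := hdisj.le_bot (Submodule.mem_inf.mpr ⟨hsH, hs⟩)
      simpa using this
    rw [hs0, add_zero] at hns
    obtain ⟨z, hz, hzall⟩ := hmemN' n hn
    have : z = h₁ := Subtype.ext (by rw [hz, hns])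
    rw [this] at hzall
    exact hh₁ (hzall β₀)
  rcases LieAlgebra.IsSimple.eq_bot_or_eq_top J with h | h
  · exact hJbot h
  · exact hJtop h

end Aux


/-- In a finite-dimensional simple Lie algebra over an algebraically closed field of
characteristic zero there exists a pair of elements with trivial common centralizer. -/
theorem exists_pair_trivial_common_centralizer
    (k : Type*) [Field k] [IsAlgClosed k] [CharZero k]
    (𝔤 : Type*) [LieRing 𝔤] [LieAlgebra k 𝔤] [FiniteDimensional k 𝔤]
    [LieAlgebra.IsSimple k 𝔤] :
    ∃ a b : 𝔤, ∀ x : 𝔤, ⁅a, x⁆ = 0 → ⁅b, x⁆ = 0 → x = 0 := by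
  classical
  haveI : LieAlgebra.IsKilling k 𝔤 := isKilling_of_isSimple k 𝔤
  obtain ⟨a, ha⟩ := LieAlgebra.exists_isCartanSubalgebra_engel k 𝔤
  haveI := ha
  set H : LieSubalgebra k 𝔤 := LieSubalgebra.engel k a with hH
  have hch : ∀ α : Weight k H 𝔤, ∃ v : 𝔤,
      v ∈ genWeightSpace 𝔤 (α : H → k) ∧ v ≠ 0 := by
    intro α
    have hbot := α.genWeightSpace_ne_bot
    have : Nontrivial (genWeightSpace 𝔤 (α : H → k)) :=
      (LieSubmodule.nontrivial_iff_ne_bot _ _ _).mpr hbot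
    obtain ⟨⟨v, hv⟩, hv0⟩ := exists_ne (0 : genWeightSpace 𝔤 (α : H → k))
    exact ⟨v, hv, by simpa [Subtype.ext_iff] using hv0⟩
  choose e he hne using hch
  refine ⟨a, ∑ α : Weight k H 𝔤, e α, fun x hax hbx => ?_⟩
  have hxH : x ∈ H := by
    rw [hH, LieSubalgebra.mem_engel_iff]
    exact ⟨1, by simpa using hax⟩
  set x' : H := ⟨x, hxH⟩ with hx'
  have hsum : ∑ α : Weight k H 𝔤, (α x') • e α = 0 := by
    have h1 : ⁅x, ∑ α : Weight k H 𝔤, e α⁆ = ∑ α : Weight k H 𝔤, ⁅x, e α⁆ :=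
      map_sum (LieAlgebra.ad k 𝔤 x) e Finset.univ
    have h2 : ⁅x, ∑ α : Weight k H 𝔤, e α⁆ = 0 := by
      rw [← neg_eq_zero, lie_skew, hbx]
    rw [← h2, h1]
    refine Finset.sum_congr rfl fun α _ => ?_
    exact (LieAlgebra.IsKilling.lie_eq_smul_of_mem_rootSpace (he α) x').symm
  have hind : iSupIndep fun α : Weight k H 𝔤 =>
      (genWeightSpace 𝔤 (α : H → k) : Submodule k 𝔤) := by
    have := iSupIndep_genWeightSpace' k H 𝔤
    rwa [← LieSubmodule.iSupIndep_toSubmodule] at this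
  have hli : LinearIndependent k e := hind.linearIndependent _ (fun α => he α) hne
  have hc : ∀ α : Weight k H 𝔤, α x' = 0 := by
    intro α
    exact Fintype.linearIndependent_iff.mp hli (fun α => α x') hsum α
  have hker : x' ∈ ⨅ α : Weight k H 𝔤, α.ker := by
    rw [Submodule.mem_iInf]
    intro α
    simpa using hc α
  rw [LieAlgebra.IsKilling.iInf_ker_weight_eq_bot] at hker
  simpa [hx'] using congrArg Subtype.val (Submodule.mem_bot k |>.mp hker)
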